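/- Suppose X : ℝⁿ → ℝⁿ is locally Lipschitz, X(p*) = 0, and for all p near p* and V ∈ ∂X(p) one has ‖V⁻¹‖ ≤ λ/(1-ελ) and ‖V‖ ≤ L. Then there exist δ > 0 and C > 0 such that ‖p - p*‖ ≤ C ‖X(p)‖ for all p ∈ B_δ(p*). In particular, p* is an isolated zero of X. -/

import Mathlib

open Filter Topology

/-- The Clarke generalized Jacobian of `X` at `p`: the convex hull of all limits of
Jacobians `DX(pₖ)` along sequences `pₖ → p` of points of differentiability of `X`. -/
def clarkeJacobian {n : ℕ}
    (X : EuclideanSpace ℝ (Fin n) → EuclideanSpace ℝ (Fin n))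
    (p : EuclideanSpace ℝ (Fin n)) :
    Set (EuclideanSpace ℝ (Fin n) →L[ℝ] EuclideanSpace ℝ (Fin n)) :=
  convexHull ℝ { H | ∃ (q : ℕ → EuclideanSpace ℝ (Fin n))
      (D : ℕ → (EuclideanSpace ℝ (Fin n) →L[ℝ] EuclideanSpace ℝ (Fin n))),
      (∀ k, HasFDerivAt X (D k) (q k)) ∧
      Tendsto q atTop (𝓝 p) ∧ Tendsto D atTop (𝓝 H) }

open Metric

open MeasureTheory Set Pointwise

/-- FTC inequality for continuous monotone functions. -/
theorem mono_integral_deriv_le {f : ℝ → ℝ} (hf : Monotone f) (hc : Continuous f)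
    (a b : ℝ) (hab : a ≤ b) :
    ∫ t in Set.Ioc a b, deriv f t ≤ f b - f a := by
  have hsf : ∀ x, hf.stieltjesFunction x = f x := by
    intro x
    rw [hf.stieltjesFunction_eq]
    exact rightLim_eq_of_tendsto (h := nhdsGT_neBot x)
      ((hc.continuousAt).tendsto.mono_left nhdsWithin_le_nhds)
  have hae : ∀ᵐ x, deriv f x
      = (Measure.rnDeriv hf.stieltjesFunction.measure volume x).toReal := by
    filter_upwards [hf.ae_hasDerivAt] with x hx using hx.deriv
  have h1 : ∫ t in Set.Ioc a b, deriv f t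
      = ∫ t in Set.Ioc a b, (Measure.rnDeriv hf.stieltjesFunction.measure volume t).toReal := by
    exact integral_congr_ae (ae_restrict_of_ae hae)
  rw [h1]
  have hμ : hf.stieltjesFunction.measure (Set.Ioc a b) = ENNReal.ofReal (f b - f a) := by
    rw [StieltjesFunction.measure_Ioc, hsf, hsf]
  have h2 := MeasureTheory.Measure.setIntegral_toReal_rnDeriv_le
    (μ := hf.stieltjesFunction.measure) (ν := volume) (s := Set.Ioc a b)
    (by rw [hμ]; exact ENNReal.ofReal_ne_top)
  refine h2.trans ?_
  rw [measureReal_def, hμ, ENNReal.toReal_ofReal (by linarith [hf hab])]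

/-- FTC for Lipschitz functions `ℝ → ℝ` over `[0,1]`. -/
theorem lipschitz_integral_deriv {g : ℝ → ℝ} {L : NNReal} (hg : LipschitzWith L g) :
    ∫ t in Set.Ioc (0:ℝ) 1, deriv g t = g 1 - g 0 := by
  set h₁ : ℝ → ℝ := fun t => g t + L * t with hh₁
  set h₂ : ℝ → ℝ := fun t => L * t - g t with hh₂
  have key : ∀ s t : ℝ, s ≤ t → |g s - g t| ≤ L * (t - s) := by
    intro s t hst
    have := hg.dist_le_mul s t
    rw [Real.dist_eq, Real.dist_eq] at this
    calc |g s - g t| ≤ L * |s - t| := this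
    _ = L * (t - s) := by rw [abs_sub_comm, abs_of_nonneg (by linarith)]
  have hm₁ : Monotone h₁ := by
    intro s t hst
    have := key s t hst
    have := abs_le.1 this
    simp only [hh₁]
    nlinarith [this.1, this.2]
  have hm₂ : Monotone h₂ := by
    intro s t hst
    have := abs_le.1 (key s t hst)
    simp only [hh₂]
    nlinarith [this.1, this.2]
  have hc : Continuous g := hg.continuous
  have hI₁ := mono_integral_deriv_le hm₁ (by continuity) 0 1 zero_le_one
  have hI₂ := mono_integral_deriv_le hm₂ (by continuity) 0 1 zero_le_one
  -- a.e. differentiability and derivative formulas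
  have hae : ∀ᵐ t : ℝ, DifferentiableAt ℝ g t := hg.ae_differentiableAt
  have hd₁ : ∀ᵐ t : ℝ, deriv h₁ t = deriv g t + L := by
    filter_upwards [hae] with t ht
    have : HasDerivAt h₁ (deriv g t + L) t := by
      exact (ht.hasDerivAt.add (((hasDerivAt_id t).const_mul (L:ℝ)))).congr_deriv (by simp)
    exact this.deriv
  have hd₂ : ∀ᵐ t : ℝ, deriv h₂ t = L - deriv g t := by
    filter_upwards [hae] with t ht
    have : HasDerivAt h₂ ((L:ℝ) - deriv g t) t := by
      exact (((hasDerivAt_id t).const_mul (L:ℝ)).sub ht.hasDerivAt).congr_deriv (by simp)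
    exact this.deriv
  -- integrability of deriv g
  have hbd : ∀ t : ℝ, |deriv g t| ≤ L := by
    intro t
    have h1 : ‖fderiv ℝ g t‖ ≤ L := norm_fderiv_le_of_lipschitz ℝ hg
    have h2 : deriv g t = fderiv ℝ g t 1 := rfl
    rw [h2]
    calc |fderiv ℝ g t 1| = ‖fderiv ℝ g t 1‖ := rfl
    _ ≤ ‖fderiv ℝ g t‖ * ‖(1:ℝ)‖ := (fderiv ℝ g t).le_opNorm 1
    _ ≤ L := by rw [norm_one, mul_one]; exact h1
  have hmeas : Measurable (deriv g) := measurable_deriv g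
  have hint : IntegrableOn (deriv g) (Set.Ioc (0:ℝ) 1) := by
    refine Integrable.mono' (integrable_const (L:ℝ)) hmeas.aestronglyMeasurable ?_
    exact Filter.Eventually.of_forall fun t => by simpa using hbd t
  have hvol : (volume (Set.Ioc (0:ℝ) 1)).toReal = 1 := by
    simp [Real.volume_Ioc]
  -- compute ∫ deriv h₁ and ∫ deriv h₂
  have e₁ : ∫ t in Set.Ioc (0:ℝ) 1, deriv h₁ t
      = (∫ t in Set.Ioc (0:ℝ) 1, deriv g t) + L := by
    rw [integral_congr_ae (ae_restrict_of_ae hd₁), integral_add hint (integrable_const _),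
      setIntegral_const, measureReal_def, hvol]
    simp
  have e₂ : ∫ t in Set.Ioc (0:ℝ) 1, deriv h₂ t
      = (L:ℝ) - ∫ t in Set.Ioc (0:ℝ) 1, deriv g t := by
    rw [integral_congr_ae (ae_restrict_of_ae hd₂), integral_sub (integrable_const _) hint,
      setIntegral_const, measureReal_def, hvol]
    simp
  rw [e₁] at hI₁; rw [e₂] at hI₂
  simp only [hh₁, hh₂] at hI₁ hI₂
  have : g 1 + (L:ℝ) * 1 - (g 0 + L * 0) = g 1 - g 0 + L := by ring
  rw [this] at hI₁
  have : (L:ℝ) * 1 - g 1 - (L * 0 - g 0) = L - (g 1 - g 0) := by ring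
  rw [this] at hI₂
  linarith

-- clamp function

noncomputable def clampI : ℝ → ℝ := fun t => min (max t 0) 1

theorem clampI_lipschitz : LipschitzWith 1 clampI := by
  rw [lipschitzWith_iff_dist_le_mul]
  intro s t
  simp only [NNReal.coe_one, one_mul, Real.dist_eq, clampI]
  calc |min (max s 0) 1 - min (max t 0) 1| ≤ |max s 0 - max t 0| := by
        simpa using abs_min_sub_min_le_max (max s 0) 1 (max t 0) 1
  _ ≤ |s - t| := abs_max_sub_max_le_abs s t 0

theorem clampI_zero : clampI 0 = 0 := by norm_num [clampI]
theorem clampI_one : clampI 1 = 1 := by norm_num [clampI]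
theorem clampI_eq {t : ℝ} (h : t ∈ Set.Icc (0:ℝ) 1) : clampI t = t := by
  simp only [clampI, max_eq_left h.1, min_eq_left h.2]
theorem clampI_mem (t : ℝ) : clampI t ∈ Set.Icc (0:ℝ) 1 := by
  constructor
  · exact le_min (le_max_right t 0) zero_le_one
  · exact min_le_right _ _


open Metric Pointwise

/-- Mean value representation: if `X` is Lipschitz on an open convex set `s`, all derivatives
of `X` on `s` lie in a closed convex set `T`, and `X` is differentiable a.e. on the open
segment from `a` to `b`, then `X b - X a = M (b - a)` for some `M ∈ T`. -/
theorem seg_mvt {n : ℕ} (X : EuclideanSpace ℝ (Fin n) → EuclideanSpace ℝ (Fin n))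
    {L₀ : NNReal} {s : Set (EuclideanSpace ℝ (Fin n))} (hs : IsOpen s) (hconv : Convex ℝ s)
    (hlip : LipschitzOnWith L₀ X s)
    {T : Set (EuclideanSpace ℝ (Fin n) →L[ℝ] EuclideanSpace ℝ (Fin n))}
    (hTc : Convex ℝ T) (hTcl : IsClosed T)
    (hmem : ∀ q ∈ s, DifferentiableAt ℝ X q → fderiv ℝ X q ∈ T)
    {a b : EuclideanSpace ℝ (Fin n)} (ha : a ∈ s) (hb : b ∈ s)
    (hseg : ∀ᵐ t : ℝ, t ∈ Set.Ioo (0:ℝ) 1 → DifferentiableAt ℝ X (a + t • (b - a))) :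
    ∃ M ∈ T, X b - X a = M (b - a) := by
  classical
  set γ : ℝ → EuclideanSpace ℝ (Fin n) := fun t => a + t • (b - a) with hγdef
  have hγmem : ∀ t ∈ Set.Icc (0:ℝ) 1, γ t ∈ s := fun t ht =>
    hconv.add_smul_sub_mem ha hb ht
  have hγ0 : γ 0 = a := by simp [hγdef]
  have hγ1 : γ 1 = b := by simp [hγdef]
  have hγderiv : ∀ t : ℝ, HasDerivAt γ (b - a) t := by
    intro t
    have h1 : HasDerivAt (fun u : ℝ => u • (b - a)) ((1:ℝ) • (b - a)) t :=
      (hasDerivAt_id t).smul_const (b - a)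
    have h2 := h1.const_add a
    rw [one_smul] at h2
    exact h2
  -- the composed path
  set g : ℝ → EuclideanSpace ℝ (Fin n) := fun t => X (γ (clampI t)) with hgdef
  have hglip : LipschitzWith (L₀ * ‖b - a‖₊) g := by
    rw [lipschitzWith_iff_dist_le_mul]
    intro t₁ t₂
    have m₁ : γ (clampI t₁) ∈ s := hγmem _ (clampI_mem t₁)
    have m₂ : γ (clampI t₂) ∈ s := hγmem _ (clampI_mem t₂)
    have h1 : dist (g t₁) (g t₂) ≤ L₀ * dist (γ (clampI t₁)) (γ (clampI t₂)) :=
      (lipschitzOnWith_iff_dist_le_mul.1 hlip) _ m₁ _ m₂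
    have h2 : dist (γ (clampI t₁)) (γ (clampI t₂)) = |clampI t₁ - clampI t₂| * ‖b - a‖ := by
      simp only [hγdef, dist_eq_norm]
      rw [show a + clampI t₁ • (b - a) - (a + clampI t₂ • (b - a))
          = (clampI t₁ - clampI t₂) • (b - a) by module]
      rw [norm_smul, Real.norm_eq_abs]
    have h3 : |clampI t₁ - clampI t₂| ≤ dist t₁ t₂ := by
      have := clampI_lipschitz.dist_le_mul t₁ t₂
      simpa [Real.dist_eq] using this
    calc dist (g t₁) (g t₂) ≤ L₀ * (|clampI t₁ - clampI t₂| * ‖b - a‖) := by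
          rw [← h2]; exact h1
    _ ≤ L₀ * (dist t₁ t₂ * ‖b - a‖) := by
        apply mul_le_mul_of_nonneg_left _ L₀.coe_nonneg
        exact mul_le_mul_of_nonneg_right h3 (norm_nonneg _)
    _ = ↑(L₀ * ‖b - a‖₊) * dist t₁ t₂ := by push_cast; ring
  -- the derivative path
  borelize (EuclideanSpace ℝ (Fin n) →L[ℝ] EuclideanSpace ℝ (Fin n))
  set F : ℝ → (EuclideanSpace ℝ (Fin n) →L[ℝ] EuclideanSpace ℝ (Fin n)) := fun t => fderiv ℝ X (γ t) with hFdef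
  have hγcont : Continuous γ := by
    apply Continuous.add continuous_const
    exact continuous_id.smul continuous_const
  have hFmeas : Measurable F := (measurable_fderiv ℝ X).comp hγcont.measurable
  have hFbound : ∀ t ∈ Set.Icc (0:ℝ) 1, ‖F t‖ ≤ L₀ :=
    fun t ht => norm_fderiv_le_of_lipschitzOn ℝ (hs.mem_nhds (hγmem t ht)) hlip
  have hFint : IntegrableOn F (Set.Ioo (0:ℝ) 1) := by
    refine Integrable.mono' (integrable_const (L₀:ℝ)) hFmeas.aestronglyMeasurable ?_
    refine (ae_restrict_iff' measurableSet_Ioo).2 (Filter.Eventually.of_forall ?_)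
    exact fun t ht => hFbound t (Set.Ioo_subset_Icc_self ht)
  have hprob : IsProbabilityMeasure (volume.restrict (Set.Ioo (0:ℝ) 1)) := by
    constructor
    rw [Measure.restrict_apply_univ, Real.volume_Ioo]
    norm_num
  set M : EuclideanSpace ℝ (Fin n) →L[ℝ] EuclideanSpace ℝ (Fin n) := ∫ t in Set.Ioo (0:ℝ) 1, F t with hMdef
  have hMmem : M ∈ T := by
    refine hTc.integral_mem hTcl ?_ hFint
    rw [ae_restrict_iff' measurableSet_Ioo]
    filter_upwards [hseg] with t ht hIoo
    exact hmem _ (hγmem t (Set.Ioo_subset_Icc_self hIoo)) (ht hIoo)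
  refine ⟨M, hMmem, ?_⟩
  -- coordinatewise FTC
  have coord : ∀ i : Fin n, (X b - X a) i = (M (b - a)) i := by
    intro i
    set gi : ℝ → ℝ := fun t => EuclideanSpace.proj i (g t) with hgidef
    have hgilip : LipschitzWith (‖(EuclideanSpace.proj (𝕜 := ℝ) i)‖₊ * (L₀ * ‖b - a‖₊)) gi :=
      ((EuclideanSpace.proj (𝕜 := ℝ) i).lipschitz).comp hglip
    have hftc := lipschitz_integral_deriv hgilip
    -- deriv gi t = proj i (F t (b - a)) for a.e. t ∈ Ioo 0 1
    have hderiv_ae : ∀ᵐ t ∂(volume.restrict (Set.Ioo (0:ℝ) 1)),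
        deriv gi t = EuclideanSpace.proj i (F t (b - a)) := by
      rw [ae_restrict_iff' measurableSet_Ioo]
      filter_upwards [hseg] with t ht hIoo
      have hdiff : DifferentiableAt ℝ X (γ t) := ht hIoo
      have hXγ : HasDerivAt (fun u => X (γ u)) (F t (b - a)) t :=
        hdiff.hasFDerivAt.comp_hasDerivAt t (hγderiv t)
      have hXγi : HasDerivAt (fun u => EuclideanSpace.proj i (X (γ u)))
          (EuclideanSpace.proj i (F t (b - a))) t :=
        (EuclideanSpace.proj (𝕜 := ℝ) i).hasFDerivAt.comp_hasDerivAt t hXγ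
      have heq : gi =ᶠ[nhds t] fun u => EuclideanSpace.proj i (X (γ u)) := by
        have hopen : Set.Ioo (0:ℝ) 1 ∈ nhds t := isOpen_Ioo.mem_nhds hIoo
        filter_upwards [hopen] with u hu
        simp only [hgidef, hgdef, clampI_eq (Set.Ioo_subset_Icc_self hu)]
      rw [heq.deriv_eq]
      exact hXγi.deriv
    -- integral computations
    have hstep1 : ∫ t in Set.Ioc (0:ℝ) 1, deriv gi t = ∫ t in Set.Ioo (0:ℝ) 1, deriv gi t :=
      integral_Ioc_eq_integral_Ioo
    have hstep2 : ∫ t in Set.Ioo (0:ℝ) 1, deriv gi t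
        = ∫ t in Set.Ioo (0:ℝ) 1, EuclideanSpace.proj i (F t (b - a)) :=
      integral_congr_ae hderiv_ae
    have happly : Integrable (fun t => F t (b - a)) (volume.restrict (Set.Ioo (0:ℝ) 1)) :=
      hFint.apply_continuousLinearMap (b - a)
    have hstep3 : ∫ t in Set.Ioo (0:ℝ) 1, EuclideanSpace.proj i (F t (b - a))
        = EuclideanSpace.proj i (∫ t in Set.Ioo (0:ℝ) 1, F t (b - a)) :=
      (EuclideanSpace.proj (𝕜 := ℝ) i).integral_comp_comm happly
    have hstep4 : ∫ t in Set.Ioo (0:ℝ) 1, F t (b - a) = M (b - a) :=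
      (ContinuousLinearMap.integral_apply hFint (b - a)).symm
    have hends : gi 1 - gi 0 = (X b) i - (X a) i := by
      simp only [hgidef, hgdef, clampI_zero, clampI_one, hγ0, hγ1]
      rfl
    have : (X b) i - (X a) i = EuclideanSpace.proj i (M (b - a)) := by
      rw [← hends, ← hftc, hstep1, hstep2, hstep3, hstep4]
    simpa using this
  ext i
  exact (by simpa using coord i)

set_option maxHeartbeats 2000000 in
/-- error bound near a regular zero: `‖p - p*‖ ≤ C‖X(p)‖` on a ball
around `p*`; in particular `p*` is an isolated zero of `X`. -/
theorem error_bound_near_regular_zero {n : ℕ}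
    (X : EuclideanSpace ℝ (Fin n) → EuclideanSpace ℝ (Fin n))
    (hX : LocallyLipschitz X)
    (pstar : EuclideanSpace ℝ (Fin n)) (hzero : X pstar = 0)
    (ε lam L δ₀ : ℝ) (hε : 0 < ε) (hlam : 0 < lam) (hL : 0 < L) (hδ₀ : 0 < δ₀)
    (hεlam : ε * lam < 1)
    (hinv : ∀ p ∈ ball pstar δ₀, ∀ V ∈ clarkeJacobian X p,
      (∃ W : EuclideanSpace ℝ (Fin n) ≃L[ℝ] EuclideanSpace ℝ (Fin n),
        (W : EuclideanSpace ℝ (Fin n) →L[ℝ] EuclideanSpace ℝ (Fin n)) = V ∧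
        ‖(W.symm : EuclideanSpace ℝ (Fin n) →L[ℝ] EuclideanSpace ℝ (Fin n))‖ ≤
          lam / (1 - ε * lam)) ∧ ‖V‖ ≤ L) :
    ∃ δ > (0 : ℝ), ∃ C > (0 : ℝ),
      (∀ p ∈ ball pstar δ, ‖p - pstar‖ ≤ C * ‖X p‖) ∧
      (∀ p ∈ ball pstar δ, X p = 0 → p = pstar) := by
  classical
  borelize (EuclideanSpace ℝ (Fin n) →L[ℝ] EuclideanSpace ℝ (Fin n))
  have h1εlam : 0 < 1 - ε * lam := by linarith
  set μ0 : ℝ := lam / (1 - ε * lam) with hμ0def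
  have hμ0pos : 0 < μ0 := div_pos hlam h1εlam
  set K := closure (clarkeJacobian X pstar) with hKdef
  -- lower bound on elements of the closure of the Clarke Jacobian at pstar
  have hChull : ∀ V ∈ clarkeJacobian X pstar, ∀ u, ‖u‖ ≤ μ0 * ‖V u‖ := by
    intro V hV u
    obtain ⟨⟨W, hWV, hWs⟩, -⟩ := hinv pstar (mem_ball_self hδ₀) V hV
    have h1 : W.symm (V u) = u := by
      rw [← hWV]; exact W.symm_apply_apply u
    calc ‖u‖ = ‖W.symm (V u)‖ := by rw [h1]
    _ ≤ ‖(W.symm : EuclideanSpace ℝ (Fin n) →L[ℝ] EuclideanSpace ℝ (Fin n))‖ * ‖V u‖ :=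
        (W.symm : EuclideanSpace ℝ (Fin n) →L[ℝ] EuclideanSpace ℝ (Fin n)).le_opNorm _
    _ ≤ μ0 * ‖V u‖ := mul_le_mul_of_nonneg_right hWs (norm_nonneg _)
  have hKlow : ∀ V ∈ K, ∀ u, ‖u‖ ≤ μ0 * ‖V u‖ := by
    intro V hV u
    obtain ⟨Vs, hVs, hVlim⟩ := mem_closure_iff_seq_limit.1 hV
    have htend : Tendsto (fun j => μ0 * ‖Vs j u‖) atTop (𝓝 (μ0 * ‖V u‖)) := by
      have h1 : Tendsto (fun j => Vs j u) atTop (𝓝 (V u)) :=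
        ((ContinuousLinearMap.apply ℝ (EuclideanSpace ℝ (Fin n)) u).continuous.tendsto V).comp hVlim
      exact (h1.norm).const_mul μ0
    exact ge_of_tendsto' htend fun j => hChull _ (hVs j) u
  -- K is compact convex
  have hKsub : K ⊆ closedBall 0 L := by
    rw [hKdef]
    refine closure_minimal (fun V hV => ?_) Metric.isClosed_closedBall
    rw [mem_closedBall_zero_iff]
    exact (hinv pstar (mem_ball_self hδ₀) V hV).2
  have hKcomp : IsCompact K :=
    Metric.isCompact_of_isClosed_isBounded isClosed_closure
      ((Metric.isBounded_closedBall).subset hKsub)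
  have hKconv : Convex ℝ K := (convex_convexHull ℝ _).closure
  -- local Lipschitz constant
  obtain ⟨L₀, r, hr0, hrδ₀, hlip⟩ :
      ∃ L₀ : NNReal, ∃ r : ℝ, 0 < r ∧ r ≤ δ₀ ∧ LipschitzOnWith L₀ X (ball pstar r) := by
    obtain ⟨K₁, t, ht, hlt⟩ := hX pstar
    obtain ⟨r₁, hr₁0, hr₁⟩ := Metric.mem_nhds_iff.1 ht
    exact ⟨K₁, min r₁ δ₀, lt_min hr₁0 hδ₀, min_le_right _ _,
      hlt.mono ((ball_subset_ball (min_le_left _ _)).trans hr₁)⟩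
  set ε' : ℝ := 1 / (2 * μ0) with hε'def
  have hε'pos : 0 < ε' := by positivity
  -- upper semicontinuity of the derivative near pstar
  have husc : ∃ δ₂ : ℝ, 0 < δ₂ ∧ δ₂ ≤ r ∧ ∀ q ∈ ball pstar δ₂,
      DifferentiableAt ℝ X q → ∃ W ∈ K, ‖fderiv ℝ X q - W‖ ≤ ε' := by
    by_contra hcon
    push_neg at hcon
    have hsel : ∀ k : ℕ, ∃ q ∈ ball pstar (min r (1/(k+1))),
        DifferentiableAt ℝ X q ∧ ∀ W ∈ K, ε' < ‖fderiv ℝ X q - W‖ := by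
      intro k
      have hpos : (0:ℝ) < min r (1/(k+1)) := lt_min hr0 (by positivity)
      obtain ⟨q, hq1, hq2, hq3⟩ := hcon (min r (1/(k+1))) hpos (min_le_left _ _)
      exact ⟨q, hq1, hq2, hq3⟩
    choose q hq hqd hqf using hsel
    set D : ℕ → (EuclideanSpace ℝ (Fin n) →L[ℝ] EuclideanSpace ℝ (Fin n)) :=
      fun k => fderiv ℝ X (q k) with hDdef
    have hDb : ∀ k, D k ∈ closedBall
        (0 : EuclideanSpace ℝ (Fin n) →L[ℝ] EuclideanSpace ℝ (Fin n)) L₀ := by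
      intro k
      rw [mem_closedBall_zero_iff]
      have : q k ∈ ball pstar r := ball_subset_ball (min_le_left _ _) (hq k)
      exact norm_fderiv_le_of_lipschitzOn ℝ (isOpen_ball.mem_nhds this) hlip
    obtain ⟨H, -, φ, hφ, hHlim⟩ := (isCompact_closedBall
      (0 : EuclideanSpace ℝ (Fin n) →L[ℝ] EuclideanSpace ℝ (Fin n)) L₀).tendsto_subseq hDb
    have hqtend : Tendsto (fun k => q (φ k)) atTop (𝓝 pstar) := by
      rw [tendsto_iff_dist_tendsto_zero]
      have hb : ∀ k : ℕ, dist (q (φ k)) pstar ≤ 1/(φ k+1) := by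
        intro k
        exact le_trans (mem_ball.1 (hq (φ k))).le (min_le_right _ _)
      have h0 : Tendsto (fun k : ℕ => 1/((k:ℝ)+1)) atTop (𝓝 0) :=
        tendsto_one_div_add_atTop_nhds_zero_nat
      exact squeeze_zero (fun k => dist_nonneg) hb (h0.comp hφ.tendsto_atTop)
    have hHK : H ∈ K := by
      refine subset_closure (subset_convexHull ℝ _ ?_)
      exact ⟨fun k => q (φ k), fun k => D (φ k),
        fun k => (hqd (φ k)).hasFDerivAt, hqtend, hHlim⟩
    obtain ⟨k0, hk0⟩ := Metric.tendsto_atTop.1 hHlim ε' hε'pos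
    have h1 : dist (D (φ k0)) H < ε' := hk0 k0 le_rfl
    have h2 : ε' < ‖fderiv ℝ X (q (φ k0)) - H‖ := hqf (φ k0) H hHK
    rw [dist_eq_norm] at h1
    exact absurd h1 (not_lt.2 h2.le)
  obtain ⟨δ₂, hδ₂0, hδ₂r, husc⟩ := husc
  -- the target convex set T
  set T := K + closedBall (0 : EuclideanSpace ℝ (Fin n) →L[ℝ] EuclideanSpace ℝ (Fin n)) ε'
    with hTdef
  have hTconv : Convex ℝ T := hKconv.add (convex_closedBall _ _)
  have hTclosed : IsClosed T :=
    (hKcomp.add (isCompact_closedBall _ _)).isClosed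
  have hTlow : ∀ M ∈ T, ∀ u : EuclideanSpace ℝ (Fin n), (1/(2*μ0)) * ‖u‖ ≤ ‖M u‖ := by
    intro M hM u
    obtain ⟨W, hW, Eb, hEb, hWE⟩ := Set.mem_add.1 hM
    rw [mem_closedBall_zero_iff] at hEb
    have h1 : (1/μ0) * ‖u‖ ≤ ‖W u‖ := by
      rw [div_mul_eq_mul_div, one_mul, div_le_iff₀ hμ0pos, mul_comm]
      exact hKlow W hW u
    have h2 : ‖Eb u‖ ≤ ε' * ‖u‖ := by
      calc ‖Eb u‖ ≤ ‖Eb‖ * ‖u‖ := Eb.le_opNorm u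
      _ ≤ ε' * ‖u‖ := mul_le_mul_of_nonneg_right hEb (norm_nonneg _)
    have h3 : ‖M u‖ = ‖W u + Eb u‖ := by rw [← hWE]; simp
    have h4 : ‖W u‖ - ‖Eb u‖ ≤ ‖W u + Eb u‖ := by
      have := norm_add_le (W u + Eb u) (-(Eb u))
      simp only [add_neg_cancel_right, norm_neg] at this
      linarith
    have : (1/μ0) * ‖u‖ - ε' * ‖u‖ ≤ ‖M u‖ := by rw [h3]; linarith
    calc (1/(2*μ0)) * ‖u‖ = (1/μ0) * ‖u‖ - ε' * ‖u‖ := by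
          rw [hε'def]; ring
    _ ≤ ‖M u‖ := this
  -- the null set of non-differentiability
  set N := {q : EuclideanSpace ℝ (Fin n) | q ∈ ball pstar δ₂ ∧ ¬ DifferentiableAt ℝ X q}
    with hNdef
  have hNmeas : MeasurableSet N :=
    measurableSet_ball.inter (measurableSet_of_differentiableAt ℝ X).compl
  have hNnull : volume N = 0 := by
    have hae := hlip.ae_differentiableWithinAt_of_mem (μ := volume)
    have h2 : ∀ᵐ q : EuclideanSpace ℝ (Fin n), q ∉ N := by
      filter_upwards [hae] with q hq
      rintro ⟨hq1, hq2⟩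
      exact hq2 ((hq (ball_subset_ball hδ₂r hq1)).differentiableAt
        (isOpen_ball.mem_nhds (ball_subset_ball hδ₂r hq1)))
    simpa [MeasureTheory.ae_iff, not_not] using h2
  -- the key error bound
  have key : ∀ p ∈ ball pstar (δ₂/2), (1/(2*μ0)) * ‖p - pstar‖ ≤ ‖X p‖ := by
    intro p hp
    set v : EuclideanSpace ℝ (Fin n) := p - pstar with hvdef
    set m : ℝ × EuclideanSpace ℝ (Fin n) → EuclideanSpace ℝ (Fin n) :=
      fun zt => pstar + zt.2 + zt.1 • v with hmdef
    have hmcont : Continuous m := by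
      apply Continuous.add
      · exact continuous_const.add continuous_snd
      · exact continuous_fst.smul continuous_const
    set A : Set (ℝ × EuclideanSpace ℝ (Fin n)) := m ⁻¹' N with hAdef
    have hAmeas : MeasurableSet A := hmcont.measurable hNmeas
    have hA0 : ((volume : Measure ℝ).prod
        (volume : Measure (EuclideanSpace ℝ (Fin n)))) A = 0 := by
      rw [MeasureTheory.Measure.prod_apply hAmeas]
      have hsec : ∀ t : ℝ,
          (volume : Measure (EuclideanSpace ℝ (Fin n))) (Prod.mk t ⁻¹' A) = 0 := by
        intro t
        have hseceq : Prod.mk t ⁻¹' A = (fun z => (pstar + t • v) + z) ⁻¹' N := by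
          ext z
          simp only [hAdef, hmdef, Set.mem_preimage]
          have he : pstar + z + t • v = (pstar + t • v) + z := by module
          rw [he]
        rw [hseceq, measure_preimage_add]
        exact hNnull
      simp [hsec]
    set B : Set (EuclideanSpace ℝ (Fin n) × ℝ) :=
      {zt | pstar + zt.1 + zt.2 • v ∈ N} with hBdef
    have hBswap : Prod.swap ⁻¹' B = A := by
      ext zt
      simp only [hBdef, hAdef, hmdef, Set.mem_preimage, Prod.swap]
      rfl
    have hBmeas : MeasurableSet B := by
      have : B = Prod.swap ⁻¹' A := by
        ext zt
        simp only [hBdef, hAdef, hmdef, Set.mem_preimage, Prod.swap]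
        rfl
      rw [this]
      exact measurable_swap hAmeas
    have hB0 : ((volume : Measure (EuclideanSpace ℝ (Fin n))).prod
        (volume : Measure ℝ)) B = 0 := by
      have hps := MeasureTheory.Measure.prod_swap
        (μ := (volume : Measure ℝ)) (ν := (volume : Measure (EuclideanSpace ℝ (Fin n))))
      rw [← hps, MeasureTheory.Measure.map_apply measurable_swap hBmeas, hBswap]
      exact hA0
    have hGae : ∀ᵐ z : EuclideanSpace ℝ (Fin n),
        (volume : Measure ℝ) {t : ℝ | pstar + z + t • v ∈ N} = 0 := by
      have h1 := (MeasureTheory.Measure.measure_prod_null hBmeas).1 hB0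
      filter_upwards [h1] with z hz
      have : Prod.mk z ⁻¹' B = {t : ℝ | pstar + z + t • v ∈ N} := rfl
      rw [← this]
      exact hz
    by_contra hcon
    push_neg at hcon
    set U : Set (EuclideanSpace ℝ (Fin n)) :=
      {z | ‖X (p + z) - X (pstar + z)‖ < (1/(2*μ0)) * ‖v‖} ∩ ball 0 (δ₂/2) with hUdef
    have hXcont : Continuous X := hX.continuous
    have hUopen : IsOpen U := by
      apply IsOpen.inter _ isOpen_ball
      have hc : Continuous fun z : EuclideanSpace ℝ (Fin n) =>
          ‖X (p + z) - X (pstar + z)‖ :=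
        ((hXcont.comp (continuous_const.add continuous_id)).sub
          (hXcont.comp (continuous_const.add continuous_id))).norm
      exact isOpen_lt hc continuous_const
    have hU0 : (0 : EuclideanSpace ℝ (Fin n)) ∈ U := by
      constructor
      · simp only [Set.mem_setOf_eq, add_zero, hzero, sub_zero]
        exact hcon
      · exact mem_ball_self (by positivity)
    have hUpos : 0 < volume U := hUopen.measure_pos volume ⟨0, hU0⟩
    obtain ⟨z, hzU, hzG⟩ : ∃ z, z ∈ U ∧
        (volume : Measure ℝ) {t : ℝ | pstar + z + t • v ∈ N} = 0 := by
      by_contra hno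
      push_neg at hno
      have hsub : U ⊆ {z : EuclideanSpace ℝ (Fin n) |
          ¬ (volume : Measure ℝ) {t : ℝ | pstar + z + t • v ∈ N} = 0} :=
        fun z hz => hno z hz
      have : volume U = 0 :=
        measure_mono_null hsub (MeasureTheory.ae_iff.1 hGae)
      exact absurd this hUpos.ne'
    obtain ⟨hzU1, hzU2⟩ := hzU
    rw [mem_ball_zero_iff] at hzU2
    set a : EuclideanSpace ℝ (Fin n) := pstar + z with hadef
    set b : EuclideanSpace ℝ (Fin n) := p + z with hbdef
    have hba : b - a = v := by rw [hadef, hbdef, hvdef]; abel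
    have haU : a ∈ ball pstar δ₂ := by
      rw [mem_ball, hadef, dist_eq_norm]
      calc ‖pstar + z - pstar‖ = ‖z‖ := by rw [add_sub_cancel_left]
      _ < δ₂/2 := hzU2
      _ ≤ δ₂ := by linarith
    have hbU : b ∈ ball pstar δ₂ := by
      rw [mem_ball, hbdef, dist_eq_norm]
      have hppstar : ‖p - pstar‖ < δ₂/2 := by
        rw [← dist_eq_norm]; exact hp
      calc ‖p + z - pstar‖ = ‖(p - pstar) + z‖ := by congr 1; abel
      _ ≤ ‖p - pstar‖ + ‖z‖ := norm_add_le _ _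
      _ < δ₂/2 + δ₂/2 := by linarith
      _ = δ₂ := by ring
    have hseg : ∀ᵐ t : ℝ, t ∈ Set.Ioo (0:ℝ) 1 → DifferentiableAt ℝ X (a + t • (b - a)) := by
      have h1 : ∀ᵐ t : ℝ, ¬ (pstar + z + t • v ∈ N) := by
        rw [MeasureTheory.ae_iff]
        simpa using hzG
      filter_upwards [h1] with t ht hIoo
      have hpt : a + t • (b - a) = pstar + z + t • v := by rw [hba, hadef]
      have hmem2 : a + t • (b - a) ∈ ball pstar δ₂ :=
        (convex_ball pstar δ₂).add_smul_sub_mem haU hbU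
          ⟨hIoo.1.le, hIoo.2.le⟩
      by_contra hnd
      exact ht (by rw [← hpt]; exact ⟨hmem2, hnd⟩)
    have hmemT : ∀ q ∈ ball pstar δ₂, DifferentiableAt ℝ X q → fderiv ℝ X q ∈ T := by
      intro q hq hd
      obtain ⟨W, hW, hWd⟩ := husc q hq hd
      exact Set.mem_add.2 ⟨W, hW, fderiv ℝ X q - W,
        mem_closedBall_zero_iff.2 hWd, by abel⟩
    obtain ⟨M, hM, hMeq⟩ := seg_mvt X isOpen_ball (convex_ball pstar δ₂)
      (hlip.mono (ball_subset_ball hδ₂r)) hTconv hTclosed hmemT haU hbU hseg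
    have hfinal : (1/(2*μ0)) * ‖v‖ ≤ ‖X b - X a‖ := by
      rw [hMeq, hba]
      exact hTlow M hM v
    rw [hbdef, hadef] at hfinal
    exact absurd hzU1 (not_lt.2 hfinal)
  refine ⟨δ₂/2, by positivity, 2*μ0, by positivity, ?_, ?_⟩
  · intro p hp
    have h1 := key p hp
    rw [div_mul_eq_mul_div, one_mul, div_le_iff₀ (by positivity)] at h1
    linarith [h1]
  · intro p hp hXp
    have h1 := key p hp
    rw [hXp] at h1
    simp only [norm_zero] at h1
    have h2 : ‖p - pstar‖ ≤ 0 := by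
      nlinarith [norm_nonneg (p - pstar)]
    have := le_antisymm h2 (norm_nonneg _)
    rwa [norm_sub_eq_zero_iff] at this
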